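/- Let K₁, …, K_n ⊆ ℝ^d be open bounded convex sets such that D = ⋃_{i=1}^n K_i is connected and for every pair i ≠ j either the closures satisfy cl(K_i) ∩ cl(K_j) = ∅ or |K_i ∩ K_j| > 0. Then D satisfies Condition B. -/

import Mathlib

open MeasureTheory Metric Set ENNReal Filter

noncomputable section

abbrev Euc (d : ℕ) := EuclideanSpace ℝ (Fin d)

/-- The visible region of `x` in `D`: the points `y ∈ D` such that the open line segment
between `x` and `y` is contained in `D`. -/
def visible {d : ℕ} (D : Set (Euc d)) (x : Euc d) : Set (Euc d) :=
  {y ∈ D | ∀ t : ℝ, t ∈ Set.Ioo (0:ℝ) 1 → t • x + (1 - t) • y ∈ D}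

/-- An axis-parallel cube with side length `l`. -/
def IsCube {d : ℕ} (Q : Set (Euc d)) (l : ℝ) : Prop :=
  ∃ a : Euc d, Q = {z : Euc d | ∀ i, a i ≤ z i ∧ z i ≤ a i + l}

/-- Distance between two sets. -/
def setDist {d : ℕ} (A B : Set (Euc d)) : ℝ := sInf (Set.image2 dist A B)

namespace Stmt19Aux

variable {d : ℕ}

/-- lower bound for infDist -/
lemma le_infDist' {s : Set (Euc d)} (hs : s.Nonempty) {x : Euc d} {b : ℝ}
    (h : ∀ y ∈ s, b ≤ dist x y) : b ≤ Metric.infDist x s := by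
  by_contra hlt
  push_neg at hlt
  obtain ⟨y, hy, hlt2⟩ := (Metric.infDist_lt_iff hs).1 hlt
  exact absurd (h y hy) (not_le.2 hlt2)

lemma setDist_le_dist {A B : Set (Euc d)} {a b : Euc d} (ha : a ∈ A) (hb : b ∈ B) :
    setDist A B ≤ dist a b := by
  refine csInf_le ⟨0, ?_⟩ (Set.mem_image2_of_mem ha hb)
  rintro r ⟨u, hu, v, hv, rfl⟩
  exact dist_nonneg

lemma le_setDist {A B : Set (Euc d)} {c : ℝ} (hA : A.Nonempty) (hB : B.Nonempty)
    (h : ∀ a ∈ A, ∀ b ∈ B, c ≤ dist a b) : c ≤ setDist A B := by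
  obtain ⟨a, ha⟩ := hA; obtain ⟨b, hb⟩ := hB
  refine le_csInf ⟨dist a b, Set.mem_image2_of_mem ha hb⟩ ?_
  rintro r ⟨u, hu, v, hv, rfl⟩
  exact h u hu v hv

/-- nonempty open sets are infinite (d ≥ 1) -/
lemma infinite_of_isOpen (hd : 0 < d) {U : Set (Euc d)} (hU : IsOpen U) (hne : U.Nonempty) :
    U.Infinite := by
  obtain ⟨z, hz⟩ := hne
  obtain ⟨ε, hε, hball⟩ := Metric.isOpen_iff.1 hU z hz
  set u : Euc d := EuclideanSpace.single (⟨0, hd⟩ : Fin d) (1 : ℝ) with hu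
  have hnu : ‖u‖ = 1 := by simp [hu]
  have hmap : ∀ t ∈ Set.Ioo (0:ℝ) ε, z + t • u ∈ U := by
    intro t ht
    apply hball
    have : dist (z + t • u) z = |t| := by
      simp [dist_eq_norm, norm_smul, hnu]
    rw [Metric.mem_ball, this, abs_of_pos ht.1]
    exact ht.2
  have hinj : Set.InjOn (fun t : ℝ => z + t • u) (Set.Ioo 0 ε) := by
    intro s hs t ht hst
    have hst2 : s • u = t • u := by
      have := congrArg (fun w => w - z) hst
      simpa [add_sub_cancel_left] using this
    have : (s - t) • u = 0 := by rw [sub_smul, hst2, sub_self]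
    rcases smul_eq_zero.1 this with h | h
    · linarith [sub_eq_zero.1 h]
    · exfalso; rw [h] at hnu; simp at hnu
  have h1 : (Set.Ioo (0:ℝ) ε).Infinite := Set.Ioo_infinite hε
  have h2 := h1.image hinj
  exact h2.mono (by rintro _ ⟨t, ht, rfl⟩; exact hmap t ht)

/-- injective choice from finitely many infinite sets -/
lemma exists_inj_choice {α ι : Type*} [Fintype ι] [DecidableEq ι] (S : ι → Set α)
    (h : ∀ i, (S i).Infinite) : ∃ f : ι → α, (∀ i, f i ∈ S i) ∧ Function.Injective f := by
  classical
  have H : ∀ s : Finset ι, ∃ f : ι → α, (∀ i ∈ s, f i ∈ S i) ∧ Set.InjOn f s := by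
    intro s
    induction s using Finset.induction_on with
    | empty => exact ⟨fun i => (h i).nonempty.choose, by simp, by simp⟩
    | @insert a s ha ih =>
      obtain ⟨f, hf, hinj⟩ := ih
      obtain ⟨b, hbS, hbn⟩ := (h a).exists_notMem_finset (s.image f)
      refine ⟨Function.update f a b, ?_, ?_⟩
      · intro i hi
        rcases Finset.mem_insert.1 hi with hi' | hi'
        · rw [hi', Function.update_self]; exact hbS
        · have hia : i ≠ a := fun h => ha (h ▸ hi')
          rw [Function.update_of_ne hia]
          exact hf i hi'
      · intro u hu v hv heq
        simp only [Finset.coe_insert, Set.mem_insert_iff, Finset.mem_coe] at hu hv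
        rcases hu with hu' | hu' <;> rcases hv with hv' | hv'
        · rw [hu', hv']
        · exfalso
          have hva : v ≠ a := fun h => ha (h ▸ hv')
          rw [hu', Function.update_self, Function.update_of_ne hva] at heq
          exact hbn (Finset.mem_image.2 ⟨v, hv', heq.symm⟩)
        · exfalso
          have hua : u ≠ a := fun h => ha (h ▸ hu')
          rw [hv', Function.update_self, Function.update_of_ne hua] at heq
          exact hbn (Finset.mem_image.2 ⟨u, hu', heq⟩)
        · have hua : u ≠ a := fun h => ha (h ▸ hu')
          have hva : v ≠ a := fun h => ha (h ▸ hv')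
          rw [Function.update_of_ne hua, Function.update_of_ne hva] at heq
          exact hinj hu' hv' heq
  obtain ⟨f, hf, hinj⟩ := H Finset.univ
  exact ⟨f, fun i => hf i (Finset.mem_univ i), fun u v huv =>
    hinj (Finset.mem_coe.2 (Finset.mem_univ u)) (Finset.mem_coe.2 (Finset.mem_univ v)) huv⟩

/-- separation of a compact set from a disjoint closed set -/
lemma exists_sep {A B : Set (Euc d)} (hA : IsCompact A) (hB : IsClosed B)
    (hAB : Disjoint A B) : ∃ ε, 0 < ε ∧ ∀ p ∈ A, ∀ q ∈ B, ε ≤ dist p q := by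
  obtain ⟨δ, hδ, hdisj⟩ := hAB.exists_thickenings hA hB
  refine ⟨δ, hδ, fun p hp q hq => ?_⟩
  by_contra hlt
  push_neg at hlt
  have h1 : q ∈ Metric.thickening δ A :=
    Metric.mem_thickening_iff.2 ⟨p, hp, by rwa [dist_comm]⟩
  have h2 : q ∈ Metric.thickening δ B := Metric.self_subset_thickening hδ B hq
  exact Set.disjoint_left.1 hdisj h1 h2

/-- points of a convex subset of D are visible from any point of it -/
lemma visible_of_convex {D U : Set (Euc d)} (hU : Convex ℝ U) (hUD : U ⊆ D)
    {x q : Euc d} (hx : x ∈ U) (hq : q ∈ U) : q ∈ visible D x := by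
  refine ⟨hUD hq, fun t ht => hUD ?_⟩
  exact hU hx hq (le_of_lt ht.1) (by linarith [ht.2]) (by ring)

lemma isOpen_visible {D : Set (Euc d)} (hD : IsOpen D) {x : Euc d} (hx : x ∈ D) :
    IsOpen (visible D x) := by
  rw [Metric.isOpen_iff]
  intro y hy
  have hseg : segment ℝ x y ⊆ D := by
    rintro p hp
    rw [segment_eq_image] at hp
    obtain ⟨θ, hθ, rfl⟩ := hp
    rcases eq_or_lt_of_le hθ.1 with h0 | h0
    · simp [← h0, hx]
    rcases eq_or_lt_of_le hθ.2 with h1 | h1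
    · simp [h1, hy.1]
    have := hy.2 (1 - θ) ⟨by linarith, by linarith⟩
    simpa [sub_sub_cancel] using this
  have hcomp : IsCompact (segment ℝ x y) := by
    rw [segment_eq_image]
    exact isCompact_Icc.image (by fun_prop)
  obtain ⟨δ, hδ, hsub⟩ := hcomp.exists_thickening_subset_open hD hseg
  refine ⟨δ, hδ, fun y' hy' => ⟨?_, ?_⟩⟩
  · apply hsub
    exact Metric.mem_thickening_iff.2 ⟨y, right_mem_segment ℝ x y, by rwa [Metric.mem_ball] at hy'⟩
  · intro t ht
    apply hsub
    refine Metric.mem_thickening_iff.2 ⟨t • x + (1 - t) • y, ?_, ?_⟩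
    · rw [segment_eq_image]
      exact ⟨1 - t, ⟨by linarith [ht.2], by linarith [ht.1]⟩, by simp [sub_sub_cancel]⟩
    · have : (t • x + (1 - t) • y') - (t • x + (1 - t) • y) = (1 - t) • (y' - y) := by
        rw [smul_sub]; abel
      rw [dist_eq_norm, this, norm_smul, Real.norm_eq_abs, abs_of_pos (by linarith [ht.2])]
      calc (1 - t) * ‖y' - y‖ ≤ 1 * ‖y' - y‖ := by
            apply mul_le_mul_of_nonneg_right (by linarith [ht.1]) (norm_nonneg _)
        _ = dist y' y := by rw [one_mul, dist_eq_norm]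
        _ < δ := by rwa [Metric.mem_ball] at hy'

/-- the axis-parallel cube of side `s` centered at `p` -/
def cubeAt (p : Euc d) (s : ℝ) : Set (Euc d) :=
  {z | ∀ i, p i - s/2 ≤ z i ∧ z i ≤ (p i - s/2) + s}

lemma isCube_cubeAt (p : Euc d) (s : ℝ) : IsCube (cubeAt p s) s := by
  refine ⟨p - (WithLp.equiv 2 _).symm (fun _ => s/2), ?_⟩
  ext z
  simp only [cubeAt, Set.mem_setOf_eq, PiLp.sub_apply, WithLp.equiv_symm_apply, WithLp.ofLp_toLp]

lemma mem_cubeAt_self (p : Euc d) {s : ℝ} (hs : 0 ≤ s) : p ∈ cubeAt p s :=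
  fun _ => ⟨by linarith, by linarith⟩

lemma cubeAt_nonempty (p : Euc d) {s : ℝ} (hs : 0 ≤ s) : (cubeAt p s).Nonempty :=
  ⟨p, mem_cubeAt_self p hs⟩

lemma cubeAt_subset_closedBall (p : Euc d) {s : ℝ} (hs : 0 ≤ s) :
    cubeAt p s ⊆ Metric.closedBall p (s/2 * Real.sqrt d) := by
  intro z hz
  rw [Metric.mem_closedBall, EuclideanSpace.dist_eq]
  have hbound : ∀ i, dist (z i) (p i) ^ 2 ≤ (s/2)^2 := by
    intro i
    obtain ⟨h1, h2⟩ := hz i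
    rw [Real.dist_eq]
    rw [sq_abs]
    apply sq_le_sq'
    · linarith
    · linarith
  calc Real.sqrt (∑ i, dist (z i) (p i) ^ 2) ≤ Real.sqrt (∑ _i : Fin d, (s/2)^2) :=
        Real.sqrt_le_sqrt (Finset.sum_le_sum fun i _ => hbound i)
    _ = Real.sqrt ((d : ℝ) * (s/2)^2) := by
        rw [Finset.sum_const, Finset.card_univ, Fintype.card_fin, nsmul_eq_mul]
    _ = s/2 * Real.sqrt d := by
        rw [Real.sqrt_mul (Nat.cast_nonneg d), Real.sqrt_sq (by linarith)]
        ring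

lemma dist_le_of_mem_cubeAt {p z : Euc d} {s : ℝ} (hs : 0 ≤ s) (hz : z ∈ cubeAt p s) :
    dist z p ≤ s/2 * Real.sqrt d :=
  cubeAt_subset_closedBall p hs hz

end Stmt19Aux

/-- Condition B: for a.e. `x ∈ D` and a.e. `y ∈ D ∖ D_x` there is a chain of at most `N`
cubes of side length comparable to `|x - y|` joining the visible regions of `x` and `y`,
with consecutive cubes mutually visible and at distance comparable to `|x - y|`. -/
def ConditionB {d : ℕ} (D : Set (Euc d)) : Prop :=
  ∃ N : ℕ, ∃ c : ℝ, 1 ≤ c ∧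
    ∀ᵐ x ∂(volume.restrict D), ∀ᵐ y ∂(volume.restrict (D \ visible D x)),
      ∃ m : ℕ, 1 ≤ m ∧ m ≤ N ∧ ∃ Q : ℕ → Set (Euc d), ∃ l : ℕ → ℝ,
        (∀ i < m, Q i ⊆ D ∧ IsCube (Q i) (l i) ∧
          c⁻¹ * ‖x - y‖ ≤ l i ∧ l i ≤ c * ‖x - y‖) ∧
        Q 0 ⊆ visible D x ∧ Q (m - 1) ⊆ visible D y ∧
        c⁻¹ * ‖x - y‖ ≤ Metric.infDist x (Q 0) ∧ Metric.infDist x (Q 0) ≤ c * ‖x - y‖ ∧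
        c⁻¹ * ‖x - y‖ ≤ Metric.infDist y (Q (m - 1)) ∧
        Metric.infDist y (Q (m - 1)) ≤ c * ‖x - y‖ ∧
        ∀ i, i + 1 < m → Q (i + 1) ⊆ (⋂ z ∈ Q i, visible D z) ∧
          c⁻¹ * ‖x - y‖ ≤ setDist (Q i) (Q (i + 1)) ∧ setDist (Q i) (Q (i + 1)) ≤ c * ‖x - y‖

set_option maxHeartbeats 4000000 in
/-- remark after Condition B: a connected finite union of open bounded
convex sets `K_i` such that any two pieces have either disjoint closures or an
intersection of positive measure satisfies Condition B. -/
theorem stmt19 (d n : ℕ) (K : Fin n → Set (Euc d))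
    (hopen : ∀ i, IsOpen (K i)) (hbd : ∀ i, Bornology.IsBounded (K i))
    (hconv : ∀ i, Convex ℝ (K i))
    (hconn : IsConnected (⋃ i, K i))
    (hpair : ∀ i j, i ≠ j →
      closure (K i) ∩ closure (K j) = ∅ ∨ 0 < volume (K i ∩ K j)) :
    ConditionB (⋃ i, K i) := by
  classical
  rcases Nat.eq_zero_or_pos d with hd0 | hd
  · -- dimension 0 : everything is visible
    subst hd0
    haveI hsub : Subsingleton (Euc 0) := ⟨fun a b => (WithLp.equiv 2 _).injective (funext fun i => i.elim0)⟩
    refine ⟨1, 1, le_rfl, ?_⟩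
    refine Filter.Eventually.of_forall (fun x => ?_)
    have hvis : (⋃ i, K i) \ visible (⋃ i, K i) x = ∅ := by
      ext y
      simp only [Set.mem_diff, Set.mem_empty_iff_false, iff_false, not_and, not_not]
      intro hy
      refine ⟨hy, fun t _ => ?_⟩
      have : t • x + (1 - t) • y = y := Subsingleton.elim _ _
      rw [this]; exact hy
    rw [hvis, Measure.restrict_empty]
    simp
  -- now d ≥ 1
  have hDopen : IsOpen (⋃ i, K i) := isOpen_iUnion hopen
  have hDne : (⋃ i, K i).Nonempty := hconn.nonempty
  obtain ⟨x₀, hx₀⟩ := hDne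
  obtain ⟨i₀, hi₀⟩ := Set.mem_iUnion.1 hx₀
  haveI : Nonempty (Fin n) := ⟨i₀⟩
  have hKD : ∀ i, K i ⊆ ⋃ i, K i := fun i => Set.subset_iUnion K i
  -- the intersection graph
  let G : SimpleGraph (Fin n) :=
    { Adj := fun i j => i ≠ j ∧ (K i ∩ K j).Nonempty
      symm := ⟨by
        rintro i j ⟨hij, hne⟩
        exact ⟨hij.symm, by rwa [Set.inter_comm] at hne⟩⟩
      loopless := ⟨fun i h => h.1 rfl⟩ }
  have hGadj : ∀ {i j}, G.Adj i j ↔ (i ≠ j ∧ (K i ∩ K j).Nonempty) := Iff.rfl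
  -- choice of marked points
  let S : (Fin n × Bool) ⊕ (Fin n × Fin n) → Set (Euc d) :=
    Sum.elim (fun p => if (K p.1).Nonempty then K p.1 else Set.univ)
             (fun p => if (K p.1 ∩ K p.2).Nonempty then K p.1 ∩ K p.2 else Set.univ)
  have hSl : ∀ (i : Fin n) (β : Bool),
      S (Sum.inl (i, β)) = if (K i).Nonempty then K i else Set.univ := fun _ _ => rfl
  have hSr : ∀ (i j : Fin n),
      S (Sum.inr (i, j)) = if (K i ∩ K j).Nonempty then K i ∩ K j else Set.univ :=
    fun _ _ => rfl
  have hSopen : ∀ e, IsOpen (S e) := by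
    rintro (⟨i, β⟩ | ⟨i, j⟩)
    · rw [hSl]; split_ifs; exacts [hopen i, isOpen_univ]
    · rw [hSr]; split_ifs; exacts [(hopen i).inter (hopen j), isOpen_univ]
  have hSne : ∀ e, (S e).Nonempty := by
    rintro (⟨i, β⟩ | ⟨i, j⟩)
    · rw [hSl]; split_ifs with h; exacts [h, Set.univ_nonempty]
    · rw [hSr]; split_ifs with h; exacts [h, Set.univ_nonempty]
  obtain ⟨f, hfmem, hfinj⟩ := Stmt19Aux.exists_inj_choice S
    (fun e => Stmt19Aux.infinite_of_isOpen hd (hSopen e) (hSne e))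
  have hball : ∀ e, ∃ ρ, 0 < ρ ∧ Metric.ball (f e) ρ ⊆ S e := fun e =>
    Metric.isOpen_iff.1 (hSopen e) _ (hfmem e)
  choose ρ hρpos hρball using hball
  -- minimal radius
  set ρ₀ : ℝ := Finset.univ.inf' Finset.univ_nonempty ρ with hρ₀_def
  have hρ₀pos : 0 < ρ₀ := (Finset.lt_inf'_iff _).2 fun e _ => hρpos e
  have hρ₀le : ∀ e, ρ₀ ≤ ρ e := fun e => Finset.inf'_le ρ (Finset.mem_univ e)
  -- minimal distance between marked points
  set T : Finset ℝ := Finset.univ.offDiag.image (fun p => dist (f p.1) (f p.2)) with hT_def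
  have hTne : T.Nonempty := by
    refine Finset.Nonempty.image ?_ _
    exact ⟨(Sum.inl (i₀, true), Sum.inl (i₀, false)),
      Finset.mem_offDiag.2 ⟨Finset.mem_univ _, Finset.mem_univ _, by simp⟩⟩
  set m₀ : ℝ := T.min' hTne with hm₀_def
  have hm₀pos : 0 < m₀ := by
    rw [hm₀_def, Finset.lt_min'_iff]
    intro r hr
    rw [hT_def] at hr
    obtain ⟨p, hp, rfl⟩ := Finset.mem_image.1 hr
    have hpne := (Finset.mem_offDiag.1 hp).2.2
    exact dist_pos.2 (fun h => hpne (hfinj h))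
  have hm₀le : ∀ e e', e ≠ e' → m₀ ≤ dist (f e) (f e') := by
    intro e e' hne
    refine Finset.min'_le _ _ ?_
    rw [hT_def]
    exact Finset.mem_image.2 ⟨(e, e'),
      Finset.mem_offDiag.2 ⟨Finset.mem_univ _, Finset.mem_univ _, by simpa using hne⟩, rfl⟩
  -- separation of pieces with disjoint closures
  have hpairsep : ∀ ij : Fin n × Fin n, ∃ ε, 0 < ε ∧
      (closure (K ij.1) ∩ closure (K ij.2) = ∅ → ∀ p ∈ K ij.1, ∀ q ∈ K ij.2, ε ≤ dist p q) := by
    rintro ⟨i, j⟩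
    by_cases hdis : closure (K i) ∩ closure (K j) = ∅
    · obtain ⟨ε, hε, hsep⟩ := Stmt19Aux.exists_sep ((hbd i).isCompact_closure)
        isClosed_closure (Set.disjoint_iff_inter_eq_empty.2 hdis)
      exact ⟨ε, hε, fun _ p hp q hq => hsep p (subset_closure hp) q (subset_closure hq)⟩
    · exact ⟨1, one_pos, fun h => absurd h hdis⟩
  choose εs hεpos hεsep using hpairsep
  set δ : ℝ := Finset.univ.inf' Finset.univ_nonempty εs with hδ_def
  have hδpos : 0 < δ := (Finset.lt_inf'_iff _).2 fun e _ => hεpos e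
  have hδle : ∀ ij, δ ≤ εs ij := fun ij => Finset.inf'_le εs (Finset.mem_univ ij)
  -- bound on the diameter
  have hDbd : Bornology.IsBounded (⋃ i, K i) :=
    Bornology.isBounded_iUnion.2 (fun i => hbd i)
  set R : ℝ := max 1 (Metric.diam (⋃ i, K i)) with hR_def
  have hR1 : (1:ℝ) ≤ R := le_max_left _ _
  have hR0 : (0:ℝ) < R := lt_of_lt_of_le one_pos hR1
  have hRD : ∀ p ∈ ⋃ i, K i, ∀ q ∈ ⋃ i, K i, dist p q ≤ R := fun p hp q hq =>
    le_trans (Metric.dist_le_diam_of_mem hDbd hp hq) (le_max_right _ _)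
  -- the basic scales
  set B : ℝ := Real.sqrt d + 1 with hB_def
  have hBd : Real.sqrt d ≤ B := by rw [hB_def]; linarith [Real.sqrt_nonneg (d:ℝ)]
  have hB1 : (1:ℝ) ≤ B := by rw [hB_def]; linarith only [Real.sqrt_nonneg (d:ℝ)]
  have hB0 : (0:ℝ) < B := lt_of_lt_of_le one_pos hB1
  set s : ℝ := min ρ₀ m₀ / (4*B) with hs_def
  have hmin0 : 0 < min ρ₀ m₀ := lt_min hρ₀pos hm₀pos
  have hs0 : 0 < s := by rw [hs_def]; positivity
  have hsd : s * Real.sqrt d ≤ min ρ₀ m₀ / 4 := by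
    rw [hs_def, div_mul_eq_mul_div, div_le_div_iff₀ (by positivity) (by norm_num)]
    nlinarith [Real.sqrt_nonneg (d:ℝ), hmin0.le]
  have hsdρ : s * Real.sqrt d ≤ ρ₀ / 4 := le_trans hsd (by linarith only [min_le_left ρ₀ m₀])
  have hsdm : s * Real.sqrt d ≤ m₀ / 4 := le_trans hsd (by linarith only [min_le_right ρ₀ m₀])
  set θ : ℝ := min (ρ₀/3) (δ/2) with hθ_def
  have hθpos : 0 < θ := lt_min (by linarith only [hρ₀pos]) (by linarith only [hδpos])
  -- the constant
  set c : ℝ := B + 3*R/ρ₀ + R/s + s/θ + 12*R/m₀ + 2*R/θ + 2 with hc_def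
  have ht1 : (0:ℝ) ≤ 3*R/ρ₀ := by positivity
  have ht2 : (0:ℝ) ≤ R/s := by positivity
  have ht3 : (0:ℝ) ≤ s/θ := by positivity
  have ht4 : (0:ℝ) ≤ 12*R/m₀ := by positivity
  have ht5 : (0:ℝ) ≤ 2*R/θ := by positivity
  have hc1 : 1 ≤ c := by rw [hc_def]; linarith
  have hc0 : 0 < c := lt_of_lt_of_le one_pos hc1
  have hcB : B ≤ c := by rw [hc_def]; linarith
  have hc3R : 3*R/ρ₀ + 1 ≤ c := by rw [hc_def]; linarith
  have hcRs : R/s ≤ c := by rw [hc_def]; linarith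
  have hcsθ : s/θ ≤ c := by rw [hc_def]; linarith
  have hcm : 12*R/m₀ ≤ c := by rw [hc_def]; linarith
  have hcRθ : 2*R/θ ≤ c := by rw [hc_def]; linarith
  have hkey : ∀ r X : ℝ, r ≤ c * X → c⁻¹ * r ≤ X := by
    intro r X h
    have h2 := mul_le_mul_of_nonneg_left h (inv_nonneg.2 hc0.le)
    rwa [← mul_assoc, inv_mul_cancel₀ hc0.ne', one_mul] at h2
  refine ⟨n+1, c, hc1, ?_⟩
  have hmeasD : MeasurableSet (⋃ i, K i) := hDopen.measurableSet
  filter_upwards [MeasureTheory.ae_restrict_mem hmeasD] with x hxD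
  have hvisopen : IsOpen (visible (⋃ i, K i) x) := Stmt19Aux.isOpen_visible hDopen hxD
  filter_upwards [MeasureTheory.ae_restrict_mem (hmeasD.diff hvisopen.measurableSet)] with y hy
  obtain ⟨hyD, hyvis⟩ := hy
  -- basic facts about x, y
  have hxy_ne : x ≠ y := by
    intro h
    refine hyvis ⟨hyD, fun t _ => ?_⟩
    have h2 : t • x + (1 - t) • y = y := by rw [h, ← add_smul]; simp
    rw [h2]; exact hyD
  have hr0 : 0 < ‖x - y‖ := by rw [norm_pos_iff, sub_ne_zero]; exact hxy_ne
  have hrR : ‖x - y‖ ≤ R := by rw [← dist_eq_norm]; exact hRD x hxD y hyD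
  obtain ⟨a, hxa⟩ := Set.mem_iUnion.1 hxD
  have hnotboth : ∀ i, x ∈ K i → y ∉ K i := fun i hxi hyi =>
    hyvis (Stmt19Aux.visible_of_convex (hconv i) (hKD i) hxi hyi)
  by_cases hsmall : ‖x - y‖ ≤ θ
  · -- SMALL CASE : a single cube inside K a ∩ K b
    obtain ⟨b, hyb⟩ := Set.mem_iUnion.1 hyD
    have hab : a ≠ b := fun h => (hnotboth a hxa) (h ▸ hyb)
    have hWab : (K a ∩ K b).Nonempty := by
      rcases hpair a b hab with hdis | hvol
      · exfalso
        have h1 : εs (a, b) ≤ dist x y := hεsep (a, b) hdis x hxa y hyb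
        have h2 : δ ≤ εs (a, b) := hδle (a, b)
        have h3 : dist x y = ‖x - y‖ := dist_eq_norm x y
        have hθδ : θ ≤ δ/2 := min_le_right _ _
        linarith only [h1, h2, h3, hθδ, hsmall, hδpos]
      · by_contra hne
        rw [Set.not_nonempty_iff_eq_empty] at hne
        rw [hne] at hvol
        simp at hvol
    have hzball : Metric.ball (f (Sum.inr (a, b))) (ρ (Sum.inr (a, b))) ⊆ K a ∩ K b := by
      have h1 := hρball (Sum.inr (a, b))
      rwa [hSr, if_pos hWab] at h1
    set z : Euc d := f (Sum.inr (a, b)) with hz_def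
    set ρe : ℝ := ρ (Sum.inr (a, b)) with hρe_def
    have hρe0 : 0 < ρe := hρpos _
    have hρ₀ρe : ρ₀ ≤ ρe := hρ₀le _
    have hzD : z ∈ ⋃ i, K i := hKD a (hzball (Metric.mem_ball_self hρe0)).1
    have hxz : ρe ≤ dist x z := by
      by_contra h
      push_neg at h
      exact hnotboth b (hzball (Metric.mem_ball.2 h)).2 hyb
    have hyz : ρe ≤ dist y z := by
      by_contra h
      push_neg at h
      exact hnotboth a hxa (hzball (Metric.mem_ball.2 h)).1
    set t : ℝ := 3 * ‖x - y‖ / ρe with ht_def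
    have ht0 : 0 < t := by rw [ht_def]; positivity
    have ht1' : t ≤ 1 := by
      have hθρ : θ ≤ ρ₀/3 := min_le_left _ _
      rw [ht_def, div_le_one hρe0]
      linarith only [hsmall, hθρ, hρ₀ρe]
    set v : Euc d := x + t • (z - x) with hv_def
    have hrad : ∀ q ∈ Stmt19Aux.cubeAt v (‖x - y‖/B), dist q v ≤ ‖x - y‖/2 := by
      intro q hq
      have h1 := Stmt19Aux.dist_le_of_mem_cubeAt (by positivity) hq
      have h2 : ‖x - y‖/B/2 * Real.sqrt d ≤ ‖x - y‖/2 := by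
        calc ‖x - y‖/B/2 * Real.sqrt d = ‖x - y‖/2 * (Real.sqrt d / B) := by ring
          _ ≤ ‖x - y‖/2 * 1 := mul_le_mul_of_nonneg_left ((div_le_one hB0).2 hBd) (by positivity)
          _ = ‖x - y‖/2 := mul_one _
      linarith only [h1, h2]
    have hsub : Stmt19Aux.cubeAt v (‖x - y‖/B) ⊆ K a ∩ K b := by
      intro q hq
      have hqv : ‖q - v‖ ≤ ‖x - y‖/2 := by rw [← dist_eq_norm]; exact hrad q hq
      have htinv : t⁻¹ = ρe / (3 * ‖x - y‖) := by rw [ht_def, inv_div]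
      constructor
      · -- q ∈ K a
        have hwK : z + t⁻¹ • (q - v) ∈ K a := by
          refine (hzball ?_).1
          rw [Metric.mem_ball]
          have hd1 : dist (z + t⁻¹ • (q - v)) z = t⁻¹ * ‖q - v‖ := by
            rw [dist_eq_norm, add_sub_cancel_left, norm_smul, Real.norm_eq_abs,
              abs_of_pos (inv_pos.2 ht0)]
          rw [hd1]
          calc t⁻¹ * ‖q - v‖ ≤ t⁻¹ * (‖x - y‖/2) :=
                mul_le_mul_of_nonneg_left hqv (inv_pos.2 ht0).le
            _ = ρe/6 := by rw [htinv]; field_simp; ring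
            _ < ρe := by linarith only [hρe0]
        have hcomb := hconv a hxa hwK (by linarith only [ht1'] : (0:ℝ) ≤ 1 - t) ht0.le (by ring)
        have htt : t • (t⁻¹ • (q - v)) = q - v := by
          rw [smul_smul, mul_inv_cancel₀ ht0.ne', one_smul]
        have heq : (1-t) • x + t • (z + t⁻¹ • (q - v)) = q := by
          rw [smul_add, htt, hv_def]
          module
        rwa [heq] at hcomb
      · -- q ∈ K b
        have hwK : z + t⁻¹ • (q - v + (1-t) • (x - y)) ∈ K b := by
          refine (hzball ?_).2
          rw [Metric.mem_ball]
          have hd1 : dist (z + t⁻¹ • (q - v + (1-t) • (x - y))) z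
              = t⁻¹ * ‖q - v + (1-t) • (x - y)‖ := by
            rw [dist_eq_norm, add_sub_cancel_left, norm_smul, Real.norm_eq_abs,
              abs_of_pos (inv_pos.2 ht0)]
          rw [hd1]
          have hn1 : ‖q - v + (1-t) • (x - y)‖ ≤ ‖x - y‖/2 + ‖x - y‖ := by
            calc ‖q - v + (1-t) • (x - y)‖ ≤ ‖q - v‖ + ‖(1-t) • (x - y)‖ := norm_add_le _ _
              _ ≤ ‖x - y‖/2 + ‖x - y‖ := by
                  have h2 : ‖(1-t) • (x - y)‖ ≤ ‖x - y‖ := by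
                    rw [norm_smul, Real.norm_eq_abs, abs_of_nonneg (by linarith only [ht1'])]
                    calc (1-t) * ‖x - y‖ ≤ 1 * ‖x - y‖ :=
                          mul_le_mul_of_nonneg_right (by linarith only [ht0]) (norm_nonneg _)
                      _ = ‖x - y‖ := one_mul _
                  linarith only [h2, hqv]
          calc t⁻¹ * ‖q - v + (1-t) • (x - y)‖ ≤ t⁻¹ * (‖x - y‖/2 + ‖x - y‖) :=
                mul_le_mul_of_nonneg_left hn1 (inv_pos.2 ht0).le
            _ = ρe/2 := by rw [htinv]; field_simp; ring
            _ < ρe := by linarith only [hρe0]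
        have hcomb := hconv b hyb hwK (by linarith only [ht1'] : (0:ℝ) ≤ 1 - t) ht0.le (by ring)
        have htt : t • (t⁻¹ • (q - v + (1-t) • (x - y))) = q - v + (1-t) • (x - y) := by
          rw [smul_smul, mul_inv_cancel₀ ht0.ne', one_smul]
        have heq : (1-t) • y + t • (z + t⁻¹ • (q - v + (1-t) • (x - y))) = q := by
          rw [smul_add, htt, hv_def]
          module
        rwa [heq] at hcomb
    have hQne : (Stmt19Aux.cubeAt v (‖x - y‖/B)).Nonempty :=
      Stmt19Aux.cubeAt_nonempty v (by positivity)
    have hvQ : v ∈ Stmt19Aux.cubeAt v (‖x - y‖/B) :=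
      Stmt19Aux.mem_cubeAt_self v (by positivity)
    -- distance estimates
    have hxv : dist x v = t * dist z x := by
      rw [hv_def, dist_comm, dist_eq_norm, add_sub_cancel_left, norm_smul,
        Real.norm_eq_abs, abs_of_pos ht0, dist_eq_norm]
    have hxv_lb : 3 * ‖x - y‖ ≤ dist x v := by
      rw [hxv]
      have h1 : ρe ≤ dist z x := by rwa [dist_comm] at hxz
      calc 3 * ‖x - y‖ = t * ρe := by rw [ht_def]; field_simp
        _ ≤ t * dist z x := mul_le_mul_of_nonneg_left h1 ht0.le
    have hxv_ub : dist x v ≤ 3 * R / ρ₀ * ‖x - y‖ := by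
      rw [hxv]
      have h1 : dist z x ≤ R := hRD z hzD x hxD
      calc t * dist z x ≤ t * R := mul_le_mul_of_nonneg_left h1 ht0.le
        _ ≤ 3 * ‖x - y‖ / ρ₀ * R := by
            rw [ht_def]
            have : 3 * ‖x - y‖ / ρe ≤ 3 * ‖x - y‖ / ρ₀ := by
              apply div_le_div_of_nonneg_left (by positivity) hρ₀pos hρ₀ρe
            exact mul_le_mul_of_nonneg_right this hR0.le
        _ = 3 * R / ρ₀ * ‖x - y‖ := by ring
    have hyv_lb : 2 * ‖x - y‖ ≤ dist y v := by
      have hexp : v - y = t • (z - y) + (1-t) • (x - y) := by rw [hv_def]; module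
      have h1 : ‖t • (z - y)‖ = t * ‖z - y‖ := by
        rw [norm_smul, Real.norm_eq_abs, abs_of_pos ht0]
      have h2 : ‖(1-t) • (x - y)‖ ≤ ‖x - y‖ := by
        rw [norm_smul, Real.norm_eq_abs, abs_of_nonneg (by linarith only [ht1'])]
        calc (1-t) * ‖x - y‖ ≤ 1 * ‖x - y‖ :=
              mul_le_mul_of_nonneg_right (by linarith only [ht0]) (norm_nonneg _)
          _ = ‖x - y‖ := one_mul _
      have h3 : 3 * ‖x - y‖ ≤ t * ‖z - y‖ := by
        have hzy : ρe ≤ ‖z - y‖ := by rwa [dist_eq_norm, norm_sub_rev] at hyz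
        calc 3 * ‖x - y‖ = t * ρe := by rw [ht_def]; field_simp
          _ ≤ t * ‖z - y‖ := mul_le_mul_of_nonneg_left hzy ht0.le
      have h4 := norm_sub_norm_le (t • (z - y)) (-((1-t) • (x - y)))
      rw [sub_neg_eq_add, norm_neg] at h4
      rw [dist_comm, dist_eq_norm, hexp]
      linarith only [h1, h2, h3, h4, hr0]
    have hyv_ub : dist y v ≤ (3 * R / ρ₀ + 1) * ‖x - y‖ := by
      have hexp : v - y = t • (z - y) + (1-t) • (x - y) := by rw [hv_def]; module
      have h1 : ‖t • (z - y)‖ ≤ 3 * R / ρ₀ * ‖x - y‖ := by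
        rw [norm_smul, Real.norm_eq_abs, abs_of_pos ht0]
        have hzy : ‖z - y‖ ≤ R := by
          rw [← dist_eq_norm, dist_comm]
          exact hRD y hyD z hzD
        calc t * ‖z - y‖ ≤ t * R := mul_le_mul_of_nonneg_left hzy ht0.le
          _ ≤ 3 * ‖x - y‖ / ρ₀ * R := by
              rw [ht_def]
              refine mul_le_mul_of_nonneg_right ?_ hR0.le
              apply div_le_div_of_nonneg_left (by positivity) hρ₀pos hρ₀ρe
          _ = 3 * R / ρ₀ * ‖x - y‖ := by ring
      have h2 : ‖(1-t) • (x - y)‖ ≤ ‖x - y‖ := by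
        rw [norm_smul, Real.norm_eq_abs, abs_of_nonneg (by linarith only [ht1'])]
        calc (1-t) * ‖x - y‖ ≤ 1 * ‖x - y‖ :=
              mul_le_mul_of_nonneg_right (by linarith only [ht0]) (norm_nonneg _)
          _ = ‖x - y‖ := one_mul _
      have h3 := norm_add_le (t • (z - y)) ((1-t) • (x - y))
      rw [dist_comm, dist_eq_norm, hexp]
      linarith only [h1, h2, h3]
    refine ⟨1, le_rfl, by omega, fun _ => Stmt19Aux.cubeAt v (‖x - y‖/B), fun _ => ‖x - y‖/B,
      ?_, ?_, ?_, ?_, ?_, ?_, ?_, ?_⟩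
    · intro i _
      refine ⟨fun q hq => hKD a (hsub hq).1, Stmt19Aux.isCube_cubeAt v _, ?_, ?_⟩
      · apply hkey
        calc ‖x - y‖ = B * (‖x - y‖/B) := by field_simp
          _ ≤ c * (‖x - y‖/B) := mul_le_mul_of_nonneg_right hcB (by positivity)
      · calc ‖x - y‖/B ≤ ‖x - y‖ := div_le_self hr0.le hB1
          _ ≤ c * ‖x - y‖ := le_mul_of_one_le_left hr0.le hc1
    · exact fun q hq => Stmt19Aux.visible_of_convex (hconv a) (hKD a) hxa (hsub hq).1
    · exact fun q hq => Stmt19Aux.visible_of_convex (hconv b) (hKD b) hyb (hsub hq).2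
    · apply Stmt19Aux.le_infDist' hQne
      intro q hq
      have h1 := hrad q hq
      have h2 := dist_triangle x q v
      have h3 : c⁻¹ * ‖x - y‖ ≤ ‖x - y‖ := hkey _ _ (le_mul_of_one_le_left hr0.le hc1)
      linarith only [h1, h2, h3, hxv_lb, hr0]
    · calc Metric.infDist x (Stmt19Aux.cubeAt v (‖x - y‖/B)) ≤ dist x v :=
            Metric.infDist_le_dist_of_mem hvQ
        _ ≤ 3 * R / ρ₀ * ‖x - y‖ := hxv_ub
        _ ≤ c * ‖x - y‖ := mul_le_mul_of_nonneg_right (by linarith only [hc3R]) hr0.le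
    · apply Stmt19Aux.le_infDist' hQne
      intro q hq
      have h1 := hrad q hq
      have h2 := dist_triangle y q v
      have h3 : c⁻¹ * ‖x - y‖ ≤ ‖x - y‖ := hkey _ _ (le_mul_of_one_le_left hr0.le hc1)
      linarith only [h1, h2, h3, hyv_lb, hr0]
    · calc Metric.infDist y (Stmt19Aux.cubeAt v (‖x - y‖/B)) ≤ dist y v :=
            Metric.infDist_le_dist_of_mem hvQ
        _ ≤ (3 * R / ρ₀ + 1) * ‖x - y‖ := hyv_ub
        _ ≤ c * ‖x - y‖ := mul_le_mul_of_nonneg_right (by linarith only [hc3R]) hr0.le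
    · intro i hi
      omega
  · -- LARGE CASE : a chain of fixed cubes along a path in the graph
    push_neg at hsmall
    -- find a reachable piece containing y
    have hbEx : ∃ b, G.Reachable a b ∧ y ∈ K b := by
      by_contra hcon
      push_neg at hcon
      have hUopen : IsOpen (⋃ i ∈ {i | G.Reachable a i}, K i) :=
        isOpen_biUnion fun i _ => hopen i
      have hVopen : IsOpen (⋃ i ∈ {i | ¬ G.Reachable a i}, K i) :=
        isOpen_biUnion fun i _ => hopen i
      have hcover : (⋃ i, K i) ⊆ (⋃ i ∈ {i | G.Reachable a i}, K i) ∪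
          (⋃ i ∈ {i | ¬ G.Reachable a i}, K i) := by
        intro w hw
        obtain ⟨i, hi⟩ := Set.mem_iUnion.1 hw
        by_cases h : G.Reachable a i
        · exact Or.inl (Set.mem_biUnion h hi)
        · exact Or.inr (Set.mem_biUnion h hi)
      have hxU : ((⋃ i, K i) ∩ ⋃ i ∈ {i | G.Reachable a i}, K i).Nonempty :=
        ⟨x, hxD, Set.mem_biUnion (SimpleGraph.Reachable.refl a) hxa⟩
      have hyV : ((⋃ i, K i) ∩ ⋃ i ∈ {i | ¬ G.Reachable a i}, K i).Nonempty := by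
        obtain ⟨b, hyb⟩ := Set.mem_iUnion.1 hyD
        exact ⟨y, hyD, Set.mem_biUnion (fun h => hcon b h hyb) hyb⟩
      obtain ⟨w, hwD, hwU, hwV⟩ :=
        hconn.isPreconnected _ _ hUopen hVopen hcover hxU hyV
      obtain ⟨i, hiR, hwi⟩ := Set.mem_iUnion₂.1 hwU
      obtain ⟨j, hjR, hwj⟩ := Set.mem_iUnion₂.1 hwV
      have hij : i ≠ j := fun h => hjR (h ▸ hiR)
      exact hjR (hiR.trans (SimpleGraph.Adj.reachable ⟨hij, ⟨w, hwi, hwj⟩⟩))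
    obtain ⟨b, hreach, hyb⟩ := hbEx
    have hab : a ≠ b := fun h => hnotboth a hxa (h ▸ hyb)
    -- a path from a to b
    obtain ⟨W0⟩ := hreach
    obtain ⟨W, hWpath⟩ := W0.toPath
    have hkn : W.length < n := by
      have := hWpath.length_lt
      rwa [Fintype.card_fin] at this
    have hk1 : 1 ≤ W.length := by
      by_contra h
      push_neg at h
      exact hab (SimpleGraph.Walk.eq_of_length_eq_zero (p := W) (by omega))
    have hadj : ∀ j, j < W.length → G.Adj (W.getVert j) (W.getVert (j+1)) :=
      fun j hj => W.adj_getVert_succ hj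
    -- choose the vertex cubes avoiding x resp. y
    have hpick : ∀ (w : Euc d) (i : Fin n), ∃ β : Bool,
        m₀/2 ≤ dist w (f (Sum.inl (i, β))) := by
      intro w i
      by_cases h : m₀/2 ≤ dist w (f (Sum.inl (i, true)))
      · exact ⟨true, h⟩
      · refine ⟨false, ?_⟩
        push_neg at h
        have h2 : m₀ ≤ dist (f (Sum.inl (i, true))) (f (Sum.inl (i, false))) :=
          hm₀le _ _ (by simp)
        have h3 := dist_triangle (f (Sum.inl (i, true))) w (f (Sum.inl (i, false)))
        rw [dist_comm (f (Sum.inl (i, true))) w] at h3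
        linarith only [h, h2, h3]
    obtain ⟨βx, hβx⟩ := hpick x a
    obtain ⟨βy, hβy⟩ := hpick y b
    -- the chain of marked indices
    set idx : ℕ → (Fin n × Bool) ⊕ (Fin n × Fin n) := fun j =>
      if j = 0 then Sum.inl (a, βx) else if j ≤ W.length then
        Sum.inr (W.getVert (j-1), W.getVert j) else Sum.inl (b, βy) with hidx
    have hidx0 : idx 0 = Sum.inl (a, βx) := by simp [hidx]
    have hidxmid : ∀ j, j ≠ 0 → j ≤ W.length →
        idx j = Sum.inr (W.getVert (j-1), W.getVert j) := by
      intro j h1 h2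
      simp only [hidx]
      rw [if_neg h1, if_pos h2]
    have hidxlast : idx (W.length + 1) = Sum.inl (b, βy) := by
      simp only [hidx]
      rw [if_neg (by omega : ¬ W.length + 1 = 0),
        if_neg (by omega : ¬ W.length + 1 ≤ W.length)]
    -- adjacency facts for middle indices
    have hadjmid : ∀ j, 1 ≤ j → j ≤ W.length → G.Adj (W.getVert (j-1)) (W.getVert j) := by
      intro j h1 h2
      have h3 := hadj (j-1) (by omega)
      rwa [Nat.sub_add_cancel h1] at h3
    -- values of S along the chain
    have hS0 : S (idx 0) = K a := by rw [hidx0, hSl, if_pos ⟨x, hxa⟩]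
    have hSmid : ∀ j, 1 ≤ j → j ≤ W.length →
        S (idx j) = K (W.getVert (j-1)) ∩ K (W.getVert j) := by
      intro j h1 h2
      rw [hidxmid j (by omega) h2, hSr, if_pos (hadjmid j h1 h2).2]
    have hSlast : S (idx (W.length + 1)) = K b := by
      rw [hidxlast, hSl, if_pos ⟨y, hyb⟩]
    -- cubes are inside the corresponding balls
    have hQball : ∀ j, Stmt19Aux.cubeAt (f (idx j)) s ⊆ S (idx j) := by
      intro j q hq
      apply hρball (idx j)
      have h1 := Stmt19Aux.dist_le_of_mem_cubeAt hs0.le hq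
      rw [Metric.mem_ball]
      have h2 : s/2 * Real.sqrt d < ρ₀ := by linarith only [hsdρ, hρ₀pos]
      exact lt_of_le_of_lt h1 (lt_of_lt_of_le h2 (hρ₀le _))
    have hQD : ∀ j, j ≤ W.length + 1 → Stmt19Aux.cubeAt (f (idx j)) s ⊆ ⋃ i, K i := by
      intro j hj q hq
      have hm := hQball j hq
      rcases Nat.eq_zero_or_pos j with rfl | hj0
      · rw [hS0] at hm; exact hKD a hm
      rcases le_or_gt j W.length with hjk | hjk
      · rw [hSmid j hj0 hjk] at hm; exact hKD _ hm.1
      · have hje : j = W.length + 1 := by omega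
        subst hje
        rw [hSlast] at hm; exact hKD b hm
    have hctrD : ∀ j, j ≤ W.length + 1 → f (idx j) ∈ ⋃ i, K i :=
      fun j hj => hQD j hj (Stmt19Aux.mem_cubeAt_self _ hs0.le)
    -- consecutive indices are distinct
    have hidx_ne : ∀ i, i + 1 ≤ W.length + 1 → idx i ≠ idx (i+1) := by
      intro i hi
      rcases Nat.eq_zero_or_pos i with rfl | hi0
      · rw [hidx0, hidxmid 1 (by omega) hk1]
        simp
      rcases le_or_gt (i+1) W.length with hik | hik
      · rw [hidxmid i (by omega) (by omega), hidxmid (i+1) (by omega) hik]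
        intro hcontra
        simp only [Sum.inr.injEq, Prod.mk.injEq, Nat.add_sub_cancel] at hcontra
        exact (hadjmid i hi0 (by omega)).ne hcontra.1
      · have hie : i = W.length := by omega
        subst hie
        rw [hidxmid W.length (by omega) le_rfl, hidxlast]
        simp
    -- side length and distance estimates that hold for every index
    have hside1 : c⁻¹ * ‖x - y‖ ≤ s := by
      apply hkey
      calc ‖x - y‖ ≤ R := hrR
        _ = (R/s) * s := by field_simp
        _ ≤ c * s := mul_le_mul_of_nonneg_right hcRs hs0.le
    have hside2 : s ≤ c * ‖x - y‖ := by
      calc s = (s/θ) * θ := by field_simp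
        _ ≤ c * θ := mul_le_mul_of_nonneg_right (by linarith only [hcsθ]) hθpos.le
        _ ≤ c * ‖x - y‖ := mul_le_mul_of_nonneg_left hsmall.le hc0.le
    have hRc : R ≤ c * ‖x - y‖ := by
      calc R = (R/θ) * θ := by field_simp
        _ ≤ c * θ := by
            refine mul_le_mul_of_nonneg_right ?_ hθpos.le
            have h6 : R/θ ≤ 2*R/θ := (div_le_div_iff_of_pos_right hθpos).2 (by linarith only [hR0])
            linarith only [h6, hcRθ]
        _ ≤ c * ‖x - y‖ := mul_le_mul_of_nonneg_left hsmall.le hc0.le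
    have hcm4 : c⁻¹ * ‖x - y‖ ≤ m₀/4 := by
      apply hkey
      calc ‖x - y‖ ≤ R := hrR
        _ = (4*R/m₀) * (m₀/4) := by field_simp
        _ ≤ c * (m₀/4) := by
            refine mul_le_mul_of_nonneg_right ?_ (by linarith only [hm₀pos])
            have h4 : 4*R/m₀ ≤ 12*R/m₀ := (div_le_div_iff_of_pos_right hm₀pos).2 (by linarith only [hR0])
            linarith only [h4, hcm]
    have hsd8 : s/2 * Real.sqrt d ≤ m₀/8 := by linarith only [hsdm]
    -- the infDist estimates at the two ends
    have hends : ∀ (w : Euc d) (j : ℕ), j ≤ W.length + 1 → w ∈ ⋃ i, K i →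
        m₀/2 ≤ dist w (f (idx j)) →
        c⁻¹ * ‖x - y‖ ≤ Metric.infDist w (Stmt19Aux.cubeAt (f (idx j)) s) ∧
        Metric.infDist w (Stmt19Aux.cubeAt (f (idx j)) s) ≤ c * ‖x - y‖ := by
      intro w j hj hwD hfar
      constructor
      · apply Stmt19Aux.le_infDist' (Stmt19Aux.cubeAt_nonempty _ hs0.le)
        intro q hq
        have h1 := Stmt19Aux.dist_le_of_mem_cubeAt hs0.le hq
        have h2 := dist_triangle w q (f (idx j))
        have h3 : dist q (f (idx j)) ≤ m₀/8 := le_trans h1 hsd8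
        linarith only [h2, h3, hfar, hcm4, hm₀pos]
      · calc Metric.infDist w (Stmt19Aux.cubeAt (f (idx j)) s) ≤ dist w (f (idx j)) :=
              Metric.infDist_le_dist_of_mem (Stmt19Aux.mem_cubeAt_self _ hs0.le)
          _ ≤ R := hRD w hwD _ (hctrD j hj)
          _ ≤ c * ‖x - y‖ := hRc
    -- the chain
    refine ⟨W.length + 2, by omega, by omega,
      fun j => Stmt19Aux.cubeAt (f (idx j)) s, fun _ => s, ?_, ?_, ?_, ?_, ?_, ?_, ?_, ?_⟩
    · intro j hj
      exact ⟨hQD j (by omega), Stmt19Aux.isCube_cubeAt _ _, hside1, hside2⟩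
    · intro q hq
      have h1 := hQball 0 hq
      rw [hS0] at h1
      exact Stmt19Aux.visible_of_convex (hconv a) (hKD a) hxa h1
    · intro q hq
      have h1 := hQball (W.length + 1) hq
      rw [hSlast] at h1
      exact Stmt19Aux.visible_of_convex (hconv b) (hKD b) hyb h1
    · exact (hends x 0 (by omega) hxD (by rw [hidx0]; exact hβx)).1
    · exact (hends x 0 (by omega) hxD (by rw [hidx0]; exact hβx)).2
    · exact (hends y (W.length + 1) (by omega) hyD (by rw [hidxlast]; exact hβy)).1
    · exact (hends y (W.length + 1) (by omega) hyD (by rw [hidxlast]; exact hβy)).2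
    · intro i hi
      have hik : i ≤ W.length := by omega
      -- the common convex piece
      have hQi : Stmt19Aux.cubeAt (f (idx i)) s ⊆ K (W.getVert i) := by
        rcases Nat.eq_zero_or_pos i with rfl | hi0
        · intro q hq
          have h1 := hQball 0 hq
          rw [hS0] at h1
          rwa [SimpleGraph.Walk.getVert_zero]
        · intro q hq
          have h1 := hQball i hq
          rw [hSmid i hi0 hik] at h1
          exact h1.2
      have hQi1 : Stmt19Aux.cubeAt (f (idx (i+1))) s ⊆ K (W.getVert i) := by
        rcases le_or_gt (i+1) W.length with hik1 | hik1
        · intro q hq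
          have h1 := hQball (i+1) hq
          rw [hSmid (i+1) (by omega) hik1] at h1
          simpa [Nat.add_sub_cancel] using h1.1
        · have hie : i = W.length := by omega
          subst hie
          intro q hq
          have h1 := hQball (W.length + 1) hq
          rw [hSlast] at h1
          rwa [SimpleGraph.Walk.getVert_length]
      refine ⟨?_, ?_, ?_⟩
      · intro q hq
        refine Set.mem_iInter₂.2 fun w hw => ?_
        exact Stmt19Aux.visible_of_convex (hconv (W.getVert i)) (hKD _) (hQi hw) (hQi1 hq)
      · -- lower bound on setDist
        have hne := hidx_ne i (by omega)
        have hd1 : m₀ ≤ dist (f (idx i)) (f (idx (i+1))) := hm₀le _ _ hne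
        apply Stmt19Aux.le_setDist (Stmt19Aux.cubeAt_nonempty _ hs0.le)
          (Stmt19Aux.cubeAt_nonempty _ hs0.le)
        intro p hp q hq
        have h1 := Stmt19Aux.dist_le_of_mem_cubeAt hs0.le hp
        have h2 := Stmt19Aux.dist_le_of_mem_cubeAt hs0.le hq
        have h3 := dist_triangle (f (idx i)) p (f (idx (i+1)))
        have h4 := dist_triangle p q (f (idx (i+1)))
        rw [dist_comm (f (idx i)) p] at h3
        have h5 : c⁻¹ * ‖x - y‖ ≤ m₀/4 := hcm4
        linarith only [h1, h2, h3, h4, h5, hd1, hsd8, hm₀pos]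
      · -- upper bound on setDist
        calc setDist (Stmt19Aux.cubeAt (f (idx i)) s) (Stmt19Aux.cubeAt (f (idx (i+1))) s)
            ≤ dist (f (idx i)) (f (idx (i+1))) :=
              Stmt19Aux.setDist_le_dist (Stmt19Aux.mem_cubeAt_self _ hs0.le)
                (Stmt19Aux.mem_cubeAt_self _ hs0.le)
          _ ≤ R := hRD _ (hctrD i (by omega)) _ (hctrD (i+1) (by omega))
          _ ≤ c * ‖x - y‖ := hRc

end
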